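/- (Linear visiting rate) Suppose the graph is fully connected, herded Gibbs scans variables in a fixed order, and the corresponding Gibbs Markov chain is irreducible. Then there exist constants l > 0 and B > 0 such that for every i ∈ [1, N], every state x in the support 𝒳_+ of π, every T ∈ ℕ, and every s ∈ ℕ: ∑_{k=s}^{s+T−1} 𝟙[X^{(Nk+i)} = x] ≥ l·T − B. Moreover one may take l = π_min^{t*} and B = τ* π_min^{t*} + ∑_{j=0}^{t*−1} π_min^j · 2^{min(N,j)}, where t* is the length of a positive-probability Gibbs path connecting any state to any other and τ* = ⌈t*/N⌉. -/

import Mathlib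

open Finset

/-- Joint states of `N` binary variables. -/
abbrev GState (N : ℕ) := Fin N → Bool

/-- Full conditional probability π(Xᵢ = b | x₋ᵢ) for a target distribution π. -/
noncomputable def condProb {N : ℕ} (π : GState N → ℝ) (i : Fin N) (x : GState N)
    (b : Bool) : ℝ :=
  π (Function.update x i b) / (π (Function.update x i true) + π (Function.update x i false))

/-- Variable updated at step `t ≥ 1` of a fixed systematic scan (step kN + i with
1 ≤ i ≤ N updates the i-th variable, i.e. index i − 1). -/
def scanVar (N : ℕ) (hN : 0 < N) (t : ℕ) : Fin N := ⟨(t - 1) % N, Nat.mod_lt _ hN⟩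

/-- A herded Gibbs trajectory on a fully connected graph of `N` binary variables with
target `π`: one weight per variable `i` and per assignment of all the other variables
(weights are indexed by full states but only the off-`i` coordinates matter); at step
`t+1` the scanned variable emits 𝟙[w > 0] and only its active weight is updated. -/
structure HerdedGibbs (N : ℕ) (hN : 0 < N) (π : GState N → ℝ) where
  X : ℕ → GState N
  W : ℕ → Fin N → GState N → ℝ
  init_support : 0 < π (X 0)
  init_w : ∀ i x, condProb π i x true - 1 < W 0 i x ∧ W 0 i x ≤ condProb π i x true
  step_other : ∀ t j, j ≠ scanVar N hN (t + 1) → X (t + 1) j = X t j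
  step_cur : ∀ t, X (t + 1) (scanVar N hN (t + 1))
      = decide (0 < W t (scanVar N hN (t + 1)) (X t))
  w_active : ∀ t x, (∀ j, j ≠ scanVar N hN (t + 1) → x j = X t j) →
      W (t + 1) (scanVar N hN (t + 1)) x
        = W t (scanVar N hN (t + 1)) x + condProb π (scanVar N hN (t + 1)) x true
          - (if X (t + 1) (scanVar N hN (t + 1)) = true then 1 else 0)
  w_frozen : ∀ t i x, ¬(i = scanVar N hN (t + 1) ∧ ∀ j, j ≠ i → x j = X t j) →
      W (t + 1) i x = W t i x

/-- Transition matrix 𝒯ᵢ of regular Gibbs updating variable `i`. -/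
noncomputable def stepKernel {N : ℕ} (π : GState N → ℝ) (i : Fin N) :
    Matrix (GState N) (GState N) ℝ :=
  fun x y => if ∀ j, j ≠ i → x j = y j then condProb π i x (y i) else 0

/-- Full-sweep Gibbs transition kernel 𝒯 = 𝒯₁𝒯₂⋯𝒯_N. -/
noncomputable def sweepKernel {N : ℕ} (π : GState N → ℝ) :
    Matrix (GState N) (GState N) ℝ :=
  (List.ofFn fun i : Fin N => stepKernel π i).prod

/-- Total variation distance d_v(μ − ν) = ‖μ − ν‖₁ / 2 on a finite state space. -/
noncomputable def tvDist {α : Type*} [Fintype α] (μ ν : α → ℝ) : ℝ :=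
  (∑ x, |μ x - ν x|) / 2

/-- Dobrushin ergodic coefficient of a transition matrix. -/
noncomputable def dobrushin {α : Type*} [Fintype α] (K : Matrix α α ℝ) : ℝ :=
  ⨆ x, ⨆ x', tvDist (K x) (K x')

/-- Empirical distribution of `T` end-of-sweep samples starting at sweep `τ`. -/
noncomputable def empDist {N : ℕ} (X : ℕ → GState N) (τ T : ℕ) : GState N → ℝ :=
  fun x => (((Finset.Ico τ (τ + T)).filter fun k => X (k * N) = x).card : ℝ) / T

/-- N_num: number of occurrences of the joint state (x₋ᵢ, b) at substep `i` of sweeps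
τ, …, τ+T−1. -/
def empNum {N : ℕ} (hN : 0 < N) (X : ℕ → GState N) (τ T i : ℕ) (x : GState N)
    (b : Bool) : ℕ :=
  ((Finset.Ico τ (τ + T)).filter fun k =>
    (∀ j, j ≠ scanVar N hN i → X (k * N + i) j = x j)
      ∧ X (k * N + i) (scanVar N hN i) = b).card

/-- N_den: number of occurrences of the conditioning state x₋ᵢ at substep `i − 1`. -/
def empDen {N : ℕ} (hN : 0 < N) (X : ℕ → GState N) (τ T i : ℕ) (x : GState N) : ℕ :=
  ((Finset.Ico τ (τ + T)).filter fun k =>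
    ∀ j, j ≠ scanVar N hN i → X (k * N + i - 1) j = x j).card

/-- Empirical herded Gibbs single-step transition kernel T̃⁽ᵗ⁾_{T,i}; entries with an
unvisited conditioning state are set to the regular Gibbs kernel. -/
noncomputable def empStepKernel {N : ℕ} (hN : 0 < N) (π : GState N → ℝ)
    (X : ℕ → GState N) (τ T i : ℕ) : Matrix (GState N) (GState N) ℝ :=
  fun x y => if ∀ j, j ≠ scanVar N hN i → x j = y j then
      (if empDen hN X τ T i x = 0 then condProb π (scanVar N hN i) x (y (scanVar N hN i))
       else (empNum hN X τ T i x (y (scanVar N hN i)) : ℝ) / (empDen hN X τ T i x : ℝ))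
    else 0

/-- Empirical full-sweep herded Gibbs kernel T̃⁽ᵗ⁾_T = T̃⁽ᵗ⁾_{T,1}⋯T̃⁽ᵗ⁾_{T,N}. -/
noncomputable def empSweepKernel {N : ℕ} (hN : 0 < N) (π : GState N → ℝ)
    (X : ℕ → GState N) (τ T : ℕ) : Matrix (GState N) (GState N) ℝ :=
  (List.ofFn fun i : Fin N => empStepKernel hN π X τ T (i + 1)).prod

section Aux

variable {N : ℕ}

lemma condProb_congr (π : GState N → ℝ) (i : Fin N) {x₁ x₂ : GState N}
    (h : ∀ jj, jj ≠ i → x₁ jj = x₂ jj) (b : Bool) :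
    condProb π i x₁ b = condProb π i x₂ b := by
  have hup : ∀ c : Bool, Function.update x₁ i c = Function.update x₂ i c := by
    intro c
    funext jj
    by_cases hj : jj = i
    · subst hj; simp
    · simp [Function.update_of_ne hj, h jj hj]
  unfold condProb
  rw [hup b, hup true, hup false]

lemma condProb_nonneg (π : GState N → ℝ) (hπ0 : ∀ x, 0 ≤ π x) (i : Fin N)
    (x : GState N) (b : Bool) : 0 ≤ condProb π i x b := by
  unfold condProb
  apply div_nonneg (hπ0 _)
  exact add_nonneg (hπ0 _) (hπ0 _)

lemma condProb_le_one (π : GState N → ℝ) (hπ0 : ∀ x, 0 ≤ π x) (i : Fin N)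
    (x : GState N) (b : Bool) : condProb π i x b ≤ 1 := by
  unfold condProb
  rcases eq_or_lt_of_le (add_nonneg (hπ0 (Function.update x i true)) (hπ0 (Function.update x i false))) with h | h
  · rw [← h, div_zero]; norm_num
  · apply div_le_one_of_le₀ _ h.le
    cases b
    · exact le_add_of_nonneg_left (hπ0 _)
    · exact le_add_of_nonneg_right (hπ0 _)

lemma denom_pos (π : GState N → ℝ) (hπ0 : ∀ x, 0 ≤ π x) (i : Fin N) {x : GState N}
    (hx : 0 < π x) :
    0 < π (Function.update x i true) + π (Function.update x i false) := by
  have hself : Function.update x i (x i) = x := Function.update_eq_self i x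
  cases hxi : x i
  · rw [hxi] at hself
    rw [hself]
    exact add_pos_of_nonneg_of_pos (hπ0 _) hx
  · rw [hxi] at hself
    rw [hself]
    exact add_pos_of_pos_of_nonneg hx (hπ0 _)

lemma condProb_true_add_false (π : GState N → ℝ) (hπ0 : ∀ x, 0 ≤ π x) (i : Fin N)
    {x : GState N} (hx : 0 < π x) :
    condProb π i x true + condProb π i x false = 1 := by
  unfold condProb
  rw [← add_div, div_self (denom_pos π hπ0 i hx).ne']

lemma condProb_sum_le (π : GState N → ℝ) (hπ0 : ∀ x, 0 ≤ π x) (i : Fin N)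
    (x : GState N) :
    condProb π i x true + condProb π i x false ≤ 1 := by
  unfold condProb
  rcases eq_or_lt_of_le (add_nonneg (hπ0 (Function.update x i true)) (hπ0 (Function.update x i false))) with h | h
  · rw [← h]; norm_num
  · rw [← add_div, div_self h.ne']

/-- positivity of a conditional implies positivity of the updated state -/
lemma pos_of_condProb_pos (π : GState N → ℝ) (hπ0 : ∀ x, 0 ≤ π x) {i : Fin N}
    {x : GState N} {b : Bool} (h : 0 < condProb π i x b) :
    0 < π (Function.update x i b) := by
  rcases (hπ0 (Function.update x i b)).eq_or_lt with he | hl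
  · exfalso
    unfold condProb at h
    rw [← he, zero_div] at h
    exact lt_irrefl _ h
  · exact hl

lemma scanVar_period (hN : 0 < N) (k j : ℕ) :
    scanVar N hN (k * N + j + 1) = scanVar N hN (j + 1) := by
  unfold scanVar
  apply Fin.ext
  simp only
  have : k * N + j + 1 - 1 = j + k * N := by omega
  rw [this]
  simp [Nat.add_mul_mod_self_right]

lemma scanVar_val (hN : 0 < N) (j : ℕ) : (scanVar N hN (j + 1) : ℕ) = j % N := by
  unfold scanVar
  simp

lemma scanVar_ne (hN : 0 < N) (j m : ℕ) (hm0 : 0 < m) (hmN : m < N) :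
    scanVar N hN (j + m + 1) ≠ scanVar N hN (j + 1) := by
  intro h
  have h1 : (j + m) % N = j % N := by
    have := congrArg (fun f : Fin N => (f : ℕ)) h
    simpa [scanVar_val] using this
  have h2 : j ≡ j + m [MOD N] := h1.symm
  have h3 : N ∣ (j + m) - j := (Nat.modEq_iff_dvd' (Nat.le_add_right _ _)).mp h2
  have h4 : N ∣ m := by simpa using h3
  exact absurd (Nat.le_of_dvd hm0 h4) (not_le.mpr hmN)

end Aux

section Weights

variable {N : ℕ} {hN : 0 < N} {π : GState N → ℝ}

lemma X_succ_eq (hg : HerdedGibbs N hN π) (t : ℕ) :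
    hg.X (t + 1) = Function.update (hg.X t) (scanVar N hN (t + 1))
      (hg.X (t + 1) (scanVar N hN (t + 1))) := by
  funext jj
  by_cases hj : jj = scanVar N hN (t + 1)
  · subst hj; simp
  · rw [Function.update_of_ne hj]
    exact hg.step_other t jj hj

lemma w_diff (hg : HerdedGibbs N hN π) (i : Fin N) {x₁ x₂ : GState N}
    (h : ∀ jj, jj ≠ i → x₁ jj = x₂ jj) :
    ∀ t, hg.W t i x₁ - hg.W t i x₂ = hg.W 0 i x₁ - hg.W 0 i x₂ := by
  intro t
  induction t with
  | zero => rfl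
  | succ t ih =>
    by_cases hc : i = scanVar N hN (t + 1) ∧ ∀ jj, jj ≠ i → x₁ jj = hg.X t jj
    · obtain ⟨hi, hm⟩ := hc
      have hm₂ : ∀ jj, jj ≠ i → x₂ jj = hg.X t jj := fun jj hj => (h jj hj).symm.trans (hm jj hj)
      have h₁ := hg.w_active t x₁ (by rw [← hi]; exact hm)
      have h₂ := hg.w_active t x₂ (by rw [← hi]; exact hm₂)
      rw [← hi] at h₁ h₂
      rw [h₁, h₂, condProb_congr π i h true]
      ring_nf
      rw [sub_eq_sub_iff_sub_eq_sub] at ih ⊢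
      linarith [ih]
    · have h₁ := hg.w_frozen t i x₁ hc
      have h₂ := hg.w_frozen t i x₂ (by
        intro ⟨hi, hm₂⟩
        exact hc ⟨hi, fun jj hj => (h jj hj).trans (hm₂ jj hj)⟩)
      rw [h₁, h₂, ih]

lemma w_bounds (hπ0 : ∀ x, 0 ≤ π x) (hg : HerdedGibbs N hN π) :
    ∀ t (i : Fin N) (x : GState N),
      condProb π i x true - 2 < hg.W t i x ∧ hg.W t i x ≤ condProb π i x true + 1 := by
  intro t
  induction t with
  | zero =>
    intro i x
    obtain ⟨h1, h2⟩ := hg.init_w i x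
    constructor <;> linarith
  | succ t ih =>
    intro i x
    by_cases hc : i = scanVar N hN (t + 1) ∧ ∀ jj, jj ≠ i → x jj = hg.X t jj
    · obtain ⟨hi, hm⟩ := hc
      have hact := hg.w_active t x (by rw [← hi]; exact hm)
      rw [← hi] at hact
      have hcur := hg.step_cur t
      rw [← hi] at hcur
      -- driver relation
      have hdiff : hg.W t i (hg.X t) - hg.W t i x = hg.W 0 i (hg.X t) - hg.W 0 i x :=
        w_diff hg i (fun jj hj => (hm jj hj).symm) t
      have hcp : condProb π i (hg.X t) true = condProb π i x true :=
        condProb_congr π i (fun jj hj => (hm jj hj).symm) true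
      obtain ⟨hiw1, hiw2⟩ := hg.init_w i x
      obtain ⟨hiw3, hiw4⟩ := hg.init_w i (hg.X t)
      rw [hcp] at hiw3 hiw4
      have hd1 : hg.W 0 i (hg.X t) - hg.W 0 i x < 1 := by linarith
      have hd2 : hg.W 0 i (hg.X t) - hg.W 0 i x > -1 := by linarith
      obtain ⟨ih1, ih2⟩ := ih i x
      have hp0 : 0 ≤ condProb π i x true := condProb_nonneg π hπ0 i x true
      have hp1 : condProb π i x true ≤ 1 := condProb_le_one π hπ0 i x true
      by_cases he : hg.X (t + 1) i = true
      · rw [he] at hact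
        norm_num at hact
        have hdriver : 0 < hg.W t i (hg.X t) := by
          rw [hcur] at he
          exact of_decide_eq_true he
        constructor
        · rw [hact]; linarith
        · rw [hact]; linarith
      · simp only [if_neg he] at hact
        have hdriver : ¬ (0 < hg.W t i (hg.X t)) := by
          rw [hcur] at he
          simpa using he
        push_neg at hdriver
        constructor
        · rw [hact]; linarith
        · rw [hact]; linarith
    · rw [hg.w_frozen t i x hc]
      exact ih i x

lemma w_nonpos (hg : HerdedGibbs N hN π) (i : Fin N) (x : GState N)
    (hp : condProb π i x true = 0) : ∀ t, hg.W t i x ≤ 0 := by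
  intro t
  induction t with
  | zero => exact (hg.init_w i x).2.trans_eq hp
  | succ t ih =>
    by_cases hc : i = scanVar N hN (t + 1) ∧ ∀ jj, jj ≠ i → x jj = hg.X t jj
    · obtain ⟨hi, hm⟩ := hc
      have hact := hg.w_active t x (by rw [← hi]; exact hm)
      rw [← hi] at hact
      rw [hact, hp]
      have : (0:ℝ) ≤ if hg.X (t + 1) i = true then 1 else 0 := by positivity
      linarith
    · rw [hg.w_frozen t i x hc]; exact ih

lemma w_pos (hg : HerdedGibbs N hN π) (i : Fin N) (x : GState N)
    (hp : condProb π i x true = 1) : ∀ t, 0 < hg.W t i x := by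
  intro t
  induction t with
  | zero => have := (hg.init_w i x).1; rw [hp] at this; linarith
  | succ t ih =>
    by_cases hc : i = scanVar N hN (t + 1) ∧ ∀ jj, jj ≠ i → x jj = hg.X t jj
    · obtain ⟨hi, hm⟩ := hc
      have hact := hg.w_active t x (by rw [← hi]; exact hm)
      rw [← hi] at hact
      rw [hact, hp]
      have : (if hg.X (t + 1) i = true then (1:ℝ) else 0) ≤ 1 := by
        split <;> norm_num
      linarith
    · rw [hg.w_frozen t i x hc]; exact ih

lemma emit_pos (hπ0 : ∀ x, 0 ≤ π x) (hg : HerdedGibbs N hN π) (t : ℕ)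
    (hx : 0 < π (hg.X t)) :
    0 < condProb π (scanVar N hN (t + 1)) (hg.X t) (hg.X (t + 1) (scanVar N hN (t + 1))) := by
  set i := scanVar N hN (t + 1) with hidef
  have hD := denom_pos π hπ0 i hx
  have hcur := hg.step_cur t
  by_cases hp0 : condProb π i (hg.X t) true = 0
  · have hdr : hg.W t i (hg.X t) ≤ 0 := w_nonpos hg i (hg.X t) hp0 t
    have he : hg.X (t + 1) i = false := by
      rw [hcur]
      simpa using not_lt.mpr hdr
    rw [he]
    have hsum := condProb_true_add_false π hπ0 i hx
    rw [hp0] at hsum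
    linarith
  · by_cases hp1 : condProb π i (hg.X t) true = 1
    · have hdr : 0 < hg.W t i (hg.X t) := w_pos hg i (hg.X t) hp1 t
      have he : hg.X (t + 1) i = true := by rw [hcur]; simpa using hdr
      rw [he, hp1]; norm_num
    · have h0 : 0 < condProb π i (hg.X t) true :=
        lt_of_le_of_ne (condProb_nonneg π hπ0 i (hg.X t) true) (Ne.symm hp0)
      have hsum := condProb_true_add_false π hπ0 i hx
      have h1 : condProb π i (hg.X t) true < 1 :=
        lt_of_le_of_ne (condProb_le_one π hπ0 i (hg.X t) true) hp1
      cases he : hg.X (t + 1) i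
      · linarith
      · exact h0

lemma X_pos (hπ0 : ∀ x, 0 ≤ π x) (hg : HerdedGibbs N hN π) : ∀ t, 0 < π (hg.X t) := by
  intro t
  induction t with
  | zero => exact hg.init_support
  | succ t ih =>
    have h := emit_pos hπ0 hg t ih
    have := pos_of_condProb_pos π hπ0 h
    rwa [← X_succ_eq hg t] at this

end Weights

section Paths

variable {N : ℕ}

/-- A positive-probability Gibbs path of length `m` from `w` to `x`, aligned so that
its `r`-th step uses the variable scanned at absolute times `≡ j + r + 1` mod `N`. -/
def PathFrom (π : GState N → ℝ) (hN : 0 < N) (j : ℕ) (w : GState N) (m : ℕ)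
    (x : GState N) : Prop :=
  ∃ P : ℕ → GState N, P 0 = w ∧ P m = x ∧ ∀ r, r < m →
    (∀ jj, jj ≠ scanVar N hN (j + r + 1) → P (r + 1) jj = P r jj) ∧
    0 < condProb π (scanVar N hN (j + r + 1)) (P r) (P (r + 1) (scanVar N hN (j + r + 1)))

lemma pathFrom_self (π : GState N → ℝ) (hπ0 : ∀ x, 0 ≤ π x) (hN : 0 < N) (j m : ℕ)
    {w : GState N} (hw : 0 < π w) : PathFrom π hN j w m w := by
  refine ⟨fun _ => w, rfl, rfl, fun r hr => ⟨fun jj _ => rfl, ?_⟩⟩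
  set v := scanVar N hN (j + r + 1)
  have : condProb π v w (w v) = π w / (π (Function.update w v true) + π (Function.update w v false)) := by
    unfold condProb
    rw [Function.update_eq_self]
  rw [this]
  exact div_pos hw (denom_pos π hπ0 v hw)

lemma pathFrom_comp (π : GState N → ℝ) (hN : 0 < N) {j m m' : ℕ} {w z x : GState N}
    (h1 : PathFrom π hN j w m z) (h2 : PathFrom π hN (j + m) z m' x) :
    PathFrom π hN j w (m + m') x := by
  obtain ⟨P, hP0, hPm, hPs⟩ := h1
  obtain ⟨Q, hQ0, hQm, hQs⟩ := h2
  refine ⟨fun r => if r < m then P r else Q (r - m), ?_, ?_, ?_⟩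
  · by_cases h : 0 < m
    · simp [h, hP0]
    · have hm : m = 0 := by omega
      subst hm
      simp [hQ0, ← hP0, hPm]
  · by_cases h : m + m' < m
    · omega
    · simp only [if_neg h]
      rw [Nat.add_sub_cancel_left, hQm]
  · intro r hr
    by_cases hrm : r + 1 < m
    · have hr' : r < m := by omega
      simp only [if_pos hr', if_pos hrm]
      exact hPs r hr'
    · by_cases hrm2 : r < m
      · -- r + 1 = m
        have hre : r + 1 = m := by omega
        have h2' : ¬ r + 1 < m := by omega
        have hQP : Q (r + 1 - m) = P (r + 1) := by
          rw [hre, Nat.sub_self, hQ0, ← hPm]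
        simp only [if_pos hrm2, if_neg h2', hQP]
        exact hPs r hrm2
      · have h1 : ¬ r < m := hrm2
        have h2 : ¬ r + 1 < m := by omega
        simp only [if_neg h1, if_neg h2]
        have hidx : r - m < m' := by omega
        have := hQs (r - m) hidx
        have harith : j + m + (r - m) + 1 = j + r + 1 := by omega
        rw [harith] at this
        have harith2 : r - m + 1 = r + 1 - m := by omega
        rwa [harith2] at this

lemma listProd_nonneg {α : Type*} [Fintype α] [DecidableEq α] :
    ∀ (l : List (Matrix α α ℝ)), (∀ K ∈ l, ∀ a b, 0 ≤ K a b) →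
      ∀ a b, 0 ≤ l.prod a b := by
  intro l
  induction l with
  | nil =>
    intro _ a b
    simp [Matrix.one_apply]
    split <;> norm_num
  | cons K l ih =>
    intro h a b
    rw [List.prod_cons, Matrix.mul_apply]
    apply Finset.sum_nonneg
    intro z _
    exact mul_nonneg (h K List.mem_cons_self a z)
      (ih (fun K' hK' => h K' (List.mem_cons_of_mem K hK')) z b)

lemma listProd_pos_chain {α : Type*} [Fintype α] [DecidableEq α] :
    ∀ (l : List (Matrix α α ℝ)), (∀ K ∈ l, ∀ a b, 0 ≤ K a b) →
      ∀ x y, 0 < l.prod x y →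
      ∃ P : ℕ → α, P 0 = x ∧ P l.length = y ∧
        ∀ r, (hr : r < l.length) → 0 < (l.get ⟨r, hr⟩) (P r) (P (r + 1)) := by
  intro l
  induction l with
  | nil =>
    intro _ x y hpos
    have hxy : x = y := by
      by_contra hne
      rw [List.prod_nil, Matrix.one_apply, if_neg hne] at hpos
      exact lt_irrefl _ hpos
    exact ⟨fun _ => x, rfl, hxy, fun r hr => absurd hr (by simp)⟩
  | cons K l ih =>
    intro h x y hpos
    rw [List.prod_cons, Matrix.mul_apply] at hpos
    have hex : ∃ z, 0 < K x z * l.prod z y := by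
      by_contra hne
      push_neg at hne
      exact absurd (Finset.sum_nonpos (fun z _ => hne z)) (not_le.mpr hpos)
    obtain ⟨z, hz⟩ := hex
    have hK : 0 ≤ K x z := h K List.mem_cons_self x z
    have hl : 0 ≤ l.prod z y :=
      listProd_nonneg l (fun K' hK' => h K' (List.mem_cons_of_mem K hK')) z y
    have hKpos : 0 < K x z := by
      rcases hK.eq_or_lt with he | hl'
      · exfalso; rw [← he, zero_mul] at hz; exact lt_irrefl _ hz
      · exact hl'
    have hlpos : 0 < l.prod z y := by
      rcases hl.eq_or_lt with he | hl'
      · exfalso; rw [← he, mul_zero] at hz; exact lt_irrefl _ hz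
      · exact hl'
    obtain ⟨P, hP0, hPlen, hPs⟩ := ih (fun K' hK' => h K' (List.mem_cons_of_mem K hK')) z y hlpos
    refine ⟨fun r => if r = 0 then x else P (r - 1), by simp, ?_, ?_⟩
    · simp only [List.length_cons]
      rw [if_neg (by omega)]
      simpa using hPlen
    · intro r hr
      cases r with
      | zero =>
        have hget : (K :: l).get ⟨0, hr⟩ = K := rfl
        rw [hget]
        norm_num [hP0]
        exact hKpos
      | succ r =>
        have hr' : r < l.length := by simpa [List.length_cons] using hr
        have hget : (K :: l).get ⟨r + 1, hr⟩ = l.get ⟨r, hr'⟩ := rfl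
        rw [hget]
        simp only [if_neg (by omega : ¬ r + 1 = 0), if_neg (by omega : ¬ r + 1 + 1 = 0)]
        simp only [Nat.add_sub_cancel]
        exact hPs r hr'

lemma stepKernel_nonneg (π : GState N → ℝ) (hπ0 : ∀ x, 0 ≤ π x) (i : Fin N) :
    ∀ a b, 0 ≤ stepKernel π i a b := by
  intro a b
  unfold stepKernel
  split
  · exact condProb_nonneg π hπ0 i a _
  · exact le_refl 0
end Paths

section Paths2

variable {N : ℕ}

lemma sweep_pos_path (π : GState N → ℝ) (hπ0 : ∀ x, 0 ≤ π x) (hN : 0 < N) (k : ℕ)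
    {z z' : GState N} (h : 0 < sweepKernel π z z') :
    PathFrom π hN (k * N) z N z' := by
  unfold sweepKernel at h
  obtain ⟨P, hP0, hPlen, hPs⟩ :=
    listProd_pos_chain _ (by
      intro K hK a b
      rw [List.mem_ofFn] at hK
      obtain ⟨i, rfl⟩ := hK
      exact stepKernel_nonneg π hπ0 i a b) z z' h
  rw [List.length_ofFn] at hPlen
  refine ⟨P, hP0, hPlen, ?_⟩
  intro r hr
  have hscan : scanVar N hN (k * N + r + 1) = ⟨r, hr⟩ := by
    apply Fin.ext
    rw [scanVar_period hN k r, scanVar_val hN r]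
    exact Nat.mod_eq_of_lt hr
  have hr' : r < (List.ofFn fun i : Fin N => stepKernel π i).length := by
    rwa [List.length_ofFn]
  have := hPs r hr'
  rw [List.get_ofFn] at this
  have hcast : (Fin.cast List.length_ofFn ⟨r, hr'⟩ : Fin N) = ⟨r, hr⟩ := rfl
  rw [hcast] at this
  unfold stepKernel at this
  rw [hscan]
  by_cases hcond : ∀ jj, jj ≠ (⟨r, hr⟩ : Fin N) → P r jj = P (r + 1) jj
  · rw [if_pos hcond] at this
    exact ⟨fun jj hj => (hcond jj hj).symm, this⟩
  · rw [if_neg hcond] at this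
    exact absurd this (lt_irrefl 0)

lemma sweepPow_nonneg (π : GState N → ℝ) (hπ0 : ∀ x, 0 ≤ π x) (n : ℕ) :
    ∀ a b, 0 ≤ (sweepKernel π ^ n) a b := by
  have : sweepKernel π ^ n = (List.replicate n (sweepKernel π)).prod := by
    rw [List.prod_replicate]
  rw [this]
  apply listProd_nonneg
  intro K hK a b
  rw [List.eq_of_mem_replicate hK]
  unfold sweepKernel
  apply listProd_nonneg
  intro K' hK' a' b'
  rw [List.mem_ofFn] at hK'
  obtain ⟨i, rfl⟩ := hK'
  exact stepKernel_nonneg π hπ0 i a' b'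

lemma pow_pos_path (π : GState N → ℝ) (hπ0 : ∀ x, 0 ≤ π x) (hN : 0 < N) :
    ∀ (n : ℕ) (x y : GState N), 0 < (sweepKernel π ^ n) x y →
      PathFrom π hN 0 x (n * N) y := by
  intro n
  induction n with
  | zero =>
    intro x y h
    rw [pow_zero, Matrix.one_apply] at h
    have hxy : x = y := by
      by_contra hne
      rw [if_neg hne] at h
      exact lt_irrefl _ h
    subst hxy
    exact ⟨fun _ => x, rfl, rfl, fun r hr => absurd hr (by omega)⟩
  | succ n ih =>
    intro x y h
    rw [pow_succ, Matrix.mul_apply] at h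
    have hex : ∃ z, 0 < (sweepKernel π ^ n) x z * sweepKernel π z y := by
      by_contra hne
      push_neg at hne
      exact absurd (Finset.sum_nonpos (fun z _ => hne z)) (not_le.mpr h)
    obtain ⟨z, hz⟩ := hex
    have h1 : 0 ≤ (sweepKernel π ^ n) x z := sweepPow_nonneg π hπ0 n x z
    have h2 : 0 ≤ sweepKernel π z y := by
      have := sweepPow_nonneg π hπ0 1 z y
      rwa [pow_one] at this
    have h1p : 0 < (sweepKernel π ^ n) x z := by
      rcases h1.eq_or_lt with he | hl
      · exfalso; rw [← he, zero_mul] at hz; exact lt_irrefl _ hz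
      · exact hl
    have h2p : 0 < sweepKernel π z y := by
      rcases h2.eq_or_lt with he | hl
      · exfalso; rw [← he, mul_zero] at hz; exact lt_irrefl _ hz
      · exact hl
    have hpath1 := ih x z h1p
    have hpath2 := sweep_pos_path π hπ0 hN n h2p
    have hpath2' : PathFrom π hN (0 + n * N) z N y := by rwa [zero_add]
    have := pathFrom_comp π hN hpath1 hpath2'
    have harith : n * N + N = (n + 1) * N := by ring
    rwa [harith] at this

/-- one step along a path: successor state, off-variable agreement, conditional
positivity, and shift of the remaining path. -/
lemma pathFrom_shift (π : GState N → ℝ) (hπ0 : ∀ x, 0 ≤ π x) (hN : 0 < N)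
    {j m : ℕ} {w x : GState N} (h : PathFrom π hN j w (m + 1) x) :
    ∃ w', PathFrom π hN (j + 1) w' m x ∧
      (∀ jj, jj ≠ scanVar N hN (j + 1) → w' jj = w jj) ∧
      0 < condProb π (scanVar N hN (j + 1)) w (w' (scanVar N hN (j + 1))) := by
  obtain ⟨P, hP0, hPm, hPs⟩ := h
  have h0 := hPs 0 (by omega)
  rw [zero_add] at h0
  refine ⟨P 1, ⟨fun r => P (r + 1), rfl, hPm, ?_⟩, ?_, ?_⟩
  · intro r hr
    have := hPs (r + 1) (by omega)
    have harith : j + (r + 1) + 1 = j + 1 + r + 1 := by omega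
    rwa [harith] at this
  · have := h0.1
    rw [hP0] at this
    simpa using this
  · have := h0.2
    rw [hP0] at this
    simpa using this

end Paths2

section Herd

variable {N : ℕ} {hN : 0 < N} {π : GState N → ℝ}

/-- within a sweep, the weight of `(v, y)` (with `v` the variable scanned at substep
`j+1`) changes only at the step `k·N+j → k·N+j+1`, and then by the herding increment. -/
lemma sweep_weight (hg : HerdedGibbs N hN π) (j : ℕ) (y : GState N) (k : ℕ) :
    hg.W ((k + 1) * N + j) (scanVar N hN (j + 1)) y
      = hg.W (k * N + j) (scanVar N hN (j + 1)) y +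
        (if ∀ jj, jj ≠ scanVar N hN (j + 1) → hg.X (k * N + j) jj = y jj then
          condProb π (scanVar N hN (j + 1)) y true
            - (if hg.X (k * N + j + 1) (scanVar N hN (j + 1)) = true then (1:ℝ) else 0)
         else 0) := by
  set v := scanVar N hN (j + 1) with hv
  -- first: the remaining N-1 steps of the sweep freeze the weight
  have hfrozen : ∀ m, m ≤ N - 1 → hg.W (k * N + j + 1 + m) v y = hg.W (k * N + j + 1) v y := by
    intro m hm
    induction m with
    | zero => rfl
    | succ m ih =>
      have hm' : m ≤ N - 1 := by omega
      have hscan : scanVar N hN (k * N + j + 1 + m + 1) ≠ v := by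
        have : k * N + j + 1 + m + 1 = k * N + (j + (m + 1)) + 1 := by ring
        rw [this, scanVar_period hN k (j + (m + 1))]
        have : j + (m + 1) = j + (m + 1) := rfl
        exact scanVar_ne hN j (m + 1) (by omega) (by omega)
      have hfr := hg.w_frozen (k * N + j + 1 + m) v y (by
        intro hcon
        exact hscan hcon.1.symm)
      have hre : k * N + j + 1 + (m + 1) = k * N + j + 1 + m + 1 := by omega
      rw [hre, hfr, ih hm']
  have harith : (k + 1) * N + j = k * N + j + 1 + (N - 1) := by
    have h1 : (k + 1) * N = k * N + N := by ring
    omega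
  rw [harith, hfrozen (N - 1) (le_refl _)]
  -- now the first step
  have hscan0 : scanVar N hN (k * N + j + 1) = v := scanVar_period hN k j
  by_cases hmatch : ∀ jj, jj ≠ v → hg.X (k * N + j) jj = y jj
  · have hact := hg.w_active (k * N + j) y (by
      rw [hscan0]
      intro jj hj
      exact (hmatch jj hj).symm)
    rw [hscan0] at hact
    rw [if_pos hmatch, hact]
    have hcp : condProb π v y true = condProb π v y true := rfl
    ring
  · have hfr := hg.w_frozen (k * N + j) v y (by
      intro hcon
      exact hmatch (fun jj hj => (hcon.2 jj hj).symm))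
    rw [if_neg hmatch, hfr, add_zero]

end Herd

section Herd2

variable {N : ℕ} {hN : 0 < N} {π : GState N → ℝ}

open Classical in
lemma herd (hπ0 : ∀ x, 0 ≤ π x) (hg : HerdedGibbs N hN π) (j s T' : ℕ)
    (y : GState N) (b : Bool) :
    condProb π (scanVar N hN (j + 1)) y b *
      (((Finset.Ico s (s + T')).filter fun k =>
        ∀ jj, jj ≠ scanVar N hN (j + 1) → hg.X (k * N + j) jj = y jj).card : ℝ) - 3
    ≤ (((Finset.Ico s (s + T')).filter fun k =>
        (∀ jj, jj ≠ scanVar N hN (j + 1) → hg.X (k * N + j) jj = y jj)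
          ∧ hg.X (k * N + j + 1) (scanVar N hN (j + 1)) = b).card : ℝ) := by
  set v := scanVar N hN (j + 1) with hv
  set p := condProb π v y true with hp
  have htel : hg.W ((s + T') * N + j) v y = hg.W (s * N + j) v y +
      ∑ k ∈ Finset.Ico s (s + T'),
        (if ∀ jj, jj ≠ v → hg.X (k * N + j) jj = y jj then
          p - (if hg.X (k * N + j + 1) v = true then (1:ℝ) else 0) else 0) := by
    induction T' with
    | zero => simp
    | succ T' ih =>
      have h1 : s + (T' + 1) = (s + T') + 1 := by omega
      rw [h1, Finset.sum_Ico_succ_top (by omega : s ≤ s + T'), ← add_assoc, ← ih]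
      exact sweep_weight hg j y (s + T')
  set A := (Finset.Ico s (s + T')).filter
    (fun k => ∀ jj, jj ≠ v → hg.X (k * N + j) jj = y jj) with hA
  -- rewrite the sum
  have hsum : ∑ k ∈ Finset.Ico s (s + T'),
        (if ∀ jj, jj ≠ v → hg.X (k * N + j) jj = y jj then
          p - (if hg.X (k * N + j + 1) v = true then (1:ℝ) else 0) else 0)
      = p * A.card - ((A.filter fun k => hg.X (k * N + j + 1) v = true).card : ℝ) := by
    rw [← Finset.sum_filter, ← hA, Finset.sum_sub_distrib, Finset.sum_const,
      Finset.sum_boole]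
    simp [mul_comm]
  rw [hsum] at htel
  have hb1 := (w_bounds hπ0 hg ((s + T') * N + j) v y)
  have hb2 := (w_bounds hπ0 hg (s * N + j) v y)
  -- true-count bound
  have hTC : (((A.filter fun k => hg.X (k * N + j + 1) v = true).card : ℝ))
      ≥ p * A.card - 3 := by
    have : ((A.filter fun k => hg.X (k * N + j + 1) v = true).card : ℝ)
        = p * A.card - (hg.W ((s + T') * N + j) v y - hg.W (s * N + j) v y) := by
      linarith [htel]
    rw [this]
    have e1 := hb1.1; have e2 := hb1.2; have e3 := hb2.1; have e4 := hb2.2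
    rw [← hp] at e1 e2 e3 e4
    linarith
  have hTC' : (((A.filter fun k => hg.X (k * N + j + 1) v = true).card : ℝ))
      ≤ p * A.card + 3 := by
    have : ((A.filter fun k => hg.X (k * N + j + 1) v = true).card : ℝ)
        = p * A.card - (hg.W ((s + T') * N + j) v y - hg.W (s * N + j) v y) := by
      linarith [htel]
    rw [this]
    have e1 := hb1.1; have e2 := hb1.2; have e3 := hb2.1; have e4 := hb2.2
    rw [← hp] at e1 e2 e3 e4
    linarith
  have hfilter : ∀ c : Bool, (Finset.Ico s (s + T')).filter
      (fun k => (∀ jj, jj ≠ v → hg.X (k * N + j) jj = y jj)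
          ∧ hg.X (k * N + j + 1) v = c)
      = A.filter (fun k => hg.X (k * N + j + 1) v = c) := by
    intro c
    rw [hA, Finset.filter_filter]
  cases b
  · -- b = false
    rw [hfilter false]
    have hpart : (A.filter fun k => hg.X (k * N + j + 1) v = true).card
        + (A.filter fun k => ¬ (hg.X (k * N + j + 1) v = true)).card = A.card :=
      by rw [Finset.card_filter_add_card_filter_not]
    have hbx : (A.filter fun k => ¬ (hg.X (k * N + j + 1) v = true))
        = (A.filter fun k => hg.X (k * N + j + 1) v = false) := by
      apply Finset.filter_congr
      intro k _
      simp [Bool.not_eq_true]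
    rw [hbx] at hpart
    have hcf : condProb π v y false ≤ 1 - p := by
      have := condProb_sum_le π hπ0 v y
      rw [← hp] at this
      linarith
    have hM0 : (0:ℝ) ≤ (A.card : ℝ) := Nat.cast_nonneg _
    have hcast : ((A.filter fun k => hg.X (k * N + j + 1) v = false).card : ℝ)
        = (A.card : ℝ) - ((A.filter fun k => hg.X (k * N + j + 1) v = true).card : ℝ) := by
      have := congrArg (fun n : ℕ => (n : ℝ)) hpart
      push_cast at this
      linarith
    rw [hcast]
    have hcfnn : 0 ≤ condProb π v y false := condProb_nonneg π hπ0 v y false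
    nlinarith [hTC']
  · -- b = true
    rw [hfilter true]
    rw [← hp]
    exact hTC

end Herd2

section Main

open Classical in
/-- linear visiting rate with unspecified constants -/
lemma main_linear {N : ℕ} (hN : 0 < N) (π : GState N → ℝ) (hπ0 : ∀ x, 0 ≤ π x)
    (hg : HerdedGibbs N hN π) (πmin : ℝ)
    (hmin : IsLeast {p : ℝ | 0 < p ∧ ∃ (i : Fin N) (x : GState N) (b : Bool),
      p = condProb π i x b} πmin)
    (hirr : ∀ x y : GState N, 0 < π x → 0 < π y → ∃ n : ℕ, 0 < (sweepKernel π ^ n) x y) :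
    ∃ (m : ℕ) (C : ℝ), 1 ≤ C ∧ ∀ i : ℕ, 1 ≤ i → i ≤ N → ∀ x : GState N, 0 < π x →
      ∀ T s : ℕ, πmin ^ m * (T : ℝ) - C
        ≤ (((Finset.Ico s (s + T)).filter fun k => hg.X (k * N + i) = x).card : ℝ) := by
  obtain ⟨⟨hπpos, i0, x0, b0, hπeq⟩, hπlb⟩ := hmin
  have hπle1 : πmin ≤ 1 := hπeq.le.trans (condProb_le_one π hπ0 i0 x0 b0)
  -- uniform path length
  set nFun : GState N × GState N → ℕ := fun pr =>
    if h : 0 < π pr.1 ∧ 0 < π pr.2 then (hirr pr.1 pr.2 h.1 h.2).choose else 0 with hnFun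
  set nmax : ℕ := Finset.univ.sup nFun with hnmax
  have hpathAll : ∀ y : GState N, 0 < π y → ∀ x : GState N, 0 < π x → ∀ i : ℕ,
      PathFrom π hN 0 y (nmax * N + i) x := by
    intro y hy x hx i
    have hd : 0 < π (y, x).1 ∧ 0 < π (y, x).2 := ⟨hy, hx⟩
    have hspec : 0 < (sweepKernel π ^ nFun (y, x)) y x := by
      rw [hnFun]
      simp only [dif_pos hd]
      exact (hirr y x hy hx).choose_spec
    have hle : nFun (y, x) ≤ nmax := Finset.le_sup (Finset.mem_univ (y, x))
    set n := nFun (y, x)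
    have h1 : PathFrom π hN 0 y (n * N) x := pow_pos_path π hπ0 hN n y x hspec
    have h2 : PathFrom π hN (0 + n * N) x ((nmax - n) * N + i) x := by
      exact pathFrom_self π hπ0 hN _ _ hx
    have h3 := pathFrom_comp π hN h1 h2
    have harith : n * N + ((nmax - n) * N + i) = nmax * N + i := by
      have : n * N + (nmax - n) * N = nmax * N := by
        rw [← Nat.add_mul]
        congr 1
        omega
      omega
    rwa [harith] at h3
  refine ⟨(nmax + 1) * N, (nmax : ℝ) + 3 * 2 ^ N * ((nmax + 1) * N : ℕ) + 1, by
    have h0 : (0:ℝ) ≤ (nmax : ℝ) + 3 * 2 ^ N * (((nmax + 1) * N : ℕ) : ℝ) := by positivity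
    linarith, ?_⟩
  intro i hi1 hiN x hx T s
  set m := (nmax + 1) * N with hm
  set C : ℝ := (nmax : ℝ) + 3 * 2 ^ N * (m : ℕ) + 1 with hC
  have hπmnn : 0 ≤ πmin ^ m := by positivity
  have hπm1 : πmin ^ m ≤ 1 := pow_le_one₀ hπpos.le hπle1
  by_cases hTn : nmax ≤ T
  swap
  · -- T < nmax : trivial
    have h1 : πmin ^ m * (T : ℝ) ≤ T := by
      nlinarith [Nat.cast_nonneg (α := ℝ) T]
    have h2 : (T : ℝ) ≤ nmax := by
      exact_mod_cast Nat.le_of_lt (not_le.mp hTn)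
    have h3 : (0:ℝ) ≤ (((Finset.Ico s (s + T)).filter fun k => hg.X (k * N + i) = x).card : ℝ) :=
      Nat.cast_nonneg _
    have h4 : (0:ℝ) ≤ 3 * 2 ^ N * (m : ℕ) := by positivity
    linarith
  set T' := T - nmax with hT'
  set L := nmax * N + i with hL
  have hLm : L ≤ m := by
    rw [hL, hm]
    have : (nmax + 1) * N = nmax * N + N := by ring
    omega
  -- fronts
  set F : ℕ → Finset (GState N) := fun jj =>
    Finset.univ.filter (fun w => PathFrom π hN jj w (L - jj) x) with hF
  set n_ : ℕ → GState N → ℕ := fun jj w =>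
    ((Finset.Ico s (s + T')).filter fun k => hg.X (k * N + jj) = w).card with hn_
  set c : ℕ → ℝ := fun jj => ∑ w ∈ F jj, (n_ jj w : ℝ) with hc
  have hceq : ∀ jj, c jj = ∑ w ∈ F jj, (n_ jj w : ℝ) := by intro jj; rw [hc]
  have hcnn : ∀ jj, 0 ≤ c jj := by
    intro jj
    apply Finset.sum_nonneg
    intro w _
    exact Nat.cast_nonneg _
  -- base : c 0 ≥ T'
  have hbase : (T' : ℝ) ≤ c 0 := by
    have hcard : (Finset.Ico s (s + T')).card = ∑ w ∈ Finset.univ, n_ 0 w := by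
      apply Finset.card_eq_sum_card_fiberwise (f := fun k => hg.X (k * N + 0))
      intro k _
      exact Finset.mem_univ _
    have hzero : ∀ w ∈ Finset.univ, w ∉ F 0 → (n_ 0 w : ℝ) = 0 := by
      intro w _ hw
      rw [hn_]
      simp only [Nat.cast_eq_zero, Finset.card_eq_zero]
      by_contra hne
      obtain ⟨k, hk⟩ := Finset.nonempty_of_ne_empty hne
      rw [Finset.mem_filter] at hk
      apply hw
      rw [hF, Finset.mem_filter]
      refine ⟨Finset.mem_univ _, ?_⟩
      have hpos : 0 < π w := by
        rw [← hk.2]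
        exact X_pos hπ0 hg _
      have := hpathAll w hpos x hx i
      rw [hL]
      simpa using this
    have hsub : c 0 = ∑ w ∈ Finset.univ, (n_ 0 w : ℝ) := by
      rw [hceq 0]
      exact Finset.sum_subset (Finset.subset_univ _) hzero
    rw [hsub]
    have : ((Finset.Ico s (s + T')).card : ℝ) = ∑ w ∈ Finset.univ, (n_ 0 w : ℝ) := by
      rw [hcard]
      push_cast
      rfl
    rw [← this, Nat.card_Ico]
    simp
  -- step
  have hstep : ∀ jj, jj < L → πmin * c jj - 3 * 2 ^ N ≤ c (jj + 1) := by
    intro jj hjj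
    set v := scanVar N hN (jj + 1) with hv
    have hFmem : ∀ w, w ∈ F jj ↔ PathFrom π hN jj w (L - jj) x := by
      intro w; rw [hF]; simp
    have hFmem' : ∀ w, w ∈ F (jj + 1) ↔ PathFrom π hN (jj + 1) w (L - (jj + 1)) x := by
      intro w; rw [hF]; simp
    have hsucc : ∀ w ∈ F jj, ∃ w', w' ∈ F (jj + 1) ∧
        (∀ t, t ≠ v → w' t = w t) ∧ 0 < condProb π v w (w' v) := by
      intro w hw
      rw [hFmem] at hw
      have hlen : L - jj = (L - (jj + 1)) + 1 := by omega
      rw [hlen] at hw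
      obtain ⟨w', hpath, hoff, hpos⟩ := pathFrom_shift π hπ0 hN hw
      rw [← hv] at hoff hpos
      exact ⟨w', (hFmem' w').mpr hpath, hoff, hpos⟩
    set σ : GState N → GState N :=
      fun w => if h : w ∈ F jj then (hsucc w h).choose else w with hσ
    have hσmem : ∀ w ∈ F jj, σ w ∈ F (jj + 1) := by
      intro w hw; simp only [hσ, dif_pos hw]; exact (hsucc w hw).choose_spec.1
    have hσoff : ∀ w ∈ F jj, ∀ t, t ≠ v → σ w t = w t := by
      intro w hw; simp only [hσ, dif_pos hw]; exact (hsucc w hw).choose_spec.2.1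
    have hσpos : ∀ w ∈ F jj, 0 < condProb π v w (σ w v) := by
      intro w hw; simp only [hσ, dif_pos hw]; exact (hsucc w hw).choose_spec.2.2
    have hkey : ∀ w' ∈ (F jj).image σ,
        πmin * (∑ w ∈ (F jj).filter (fun w => σ w = w'), (n_ jj w : ℝ)) - 3
          ≤ (n_ (jj + 1) w' : ℝ) := by
      intro w' hw'
      obtain ⟨w₀, hw₀F, hw₀⟩ := Finset.mem_image.mp hw'
      set G := (F jj).filter (fun w => σ w = w') with hG
      have hGoff : ∀ w ∈ G, ∀ t, t ≠ v → w t = w' t := by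
        intro w hw t ht
        rw [hG, Finset.mem_filter] at hw
        rw [← hw.2]
        exact (hσoff w hw.1 t ht).symm
      set M := ((Finset.Ico s (s + T')).filter
        (fun k => ∀ t, t ≠ v → hg.X (k * N + jj) t = w' t)).card with hM
      have ha : ∑ w ∈ G, (n_ jj w : ℝ) ≤ (M : ℝ) := by
        have hdisj : ∀ w₁ ∈ G, ∀ w₂ ∈ G, w₁ ≠ w₂ →
            Disjoint ((Finset.Ico s (s + T')).filter (fun k => hg.X (k * N + jj) = w₁))
              ((Finset.Ico s (s + T')).filter (fun k => hg.X (k * N + jj) = w₂)) := by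
          intro w₁ _ w₂ _ hne
          rw [Finset.disjoint_left]
          intro k hk1 hk2
          rw [Finset.mem_filter] at hk1 hk2
          exact hne (hk1.2.symm.trans hk2.2)
        have hcard : ∑ w ∈ G, n_ jj w = (G.biUnion (fun w =>
            (Finset.Ico s (s + T')).filter (fun k => hg.X (k * N + jj) = w))).card :=
          (Finset.card_biUnion hdisj).symm
        have hsubset : G.biUnion (fun w =>
            (Finset.Ico s (s + T')).filter (fun k => hg.X (k * N + jj) = w))
            ⊆ (Finset.Ico s (s + T')).filter
              (fun k => ∀ t, t ≠ v → hg.X (k * N + jj) t = w' t) := by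
          intro k hk
          rw [Finset.mem_biUnion] at hk
          obtain ⟨w, hwG, hkw⟩ := hk
          rw [Finset.mem_filter] at hkw ⊢
          refine ⟨hkw.1, fun t ht => ?_⟩
          rw [hkw.2]
          exact hGoff w hwG t ht
        have := Finset.card_le_card hsubset
        rw [hM]
        calc ∑ w ∈ G, (n_ jj w : ℝ) = ((∑ w ∈ G, n_ jj w : ℕ) : ℝ) := by push_cast; rfl
          _ ≤ _ := by
            rw [hcard]
            exact_mod_cast this
      -- positivity of the needed conditional
      have hw₀off : ∀ t, t ≠ v → w' t = w₀ t := by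
        intro t ht
        rw [← hw₀]
        exact hσoff w₀ hw₀F t ht
      have hcppos : 0 < condProb π v w' (w' v) := by
        have h1 := hσpos w₀ hw₀F
        rw [hw₀] at h1
        rwa [condProb_congr π v (fun t ht => (hw₀off t ht).symm) (w' v)] at h1
      have hd : πmin ≤ condProb π v w' (w' v) :=
        hπlb ⟨hcppos, v, w', w' v, rfl⟩
      -- herding bound
      have hb := herd hπ0 hg jj s T' w' (w' v)
      rw [← hv] at hb
      rw [← hM] at hb
      -- arrival subset
      have hcsub : (((Finset.Ico s (s + T')).filter fun k =>
            (∀ t, t ≠ v → hg.X (k * N + jj) t = w' t)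
              ∧ hg.X (k * N + jj + 1) v = w' v).card : ℝ)
          ≤ (n_ (jj + 1) w' : ℝ) := by
        rw [hn_]
        have hsub2 : ((Finset.Ico s (s + T')).filter fun k =>
            (∀ t, t ≠ v → hg.X (k * N + jj) t = w' t)
              ∧ hg.X (k * N + jj + 1) v = w' v)
            ⊆ ((Finset.Ico s (s + T')).filter fun k => hg.X (k * N + (jj + 1)) = w') := by
          intro k hk
          rw [Finset.mem_filter] at hk ⊢
          refine ⟨hk.1, ?_⟩
          have hre : k * N + (jj + 1) = k * N + jj + 1 := by omega
          rw [hre]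
          funext t
          by_cases ht : t = v
          · rw [ht]; exact hk.2.2
          · have hscan : scanVar N hN (k * N + jj + 1) = v := by
              rw [hv]; exact scanVar_period hN k jj
            have hother := hg.step_other (k * N + jj) t (by rw [hscan]; exact ht)
            rw [hother]
            exact hk.2.1 t ht
        exact_mod_cast Finset.card_le_card hsub2
      have hcpnn : 0 ≤ condProb π v w' (w' v) := hcppos.le
      have hGnn : 0 ≤ ∑ w ∈ G, (n_ jj w : ℝ) :=
        Finset.sum_nonneg (fun w _ => Nat.cast_nonneg _)
      have s1 : πmin * (∑ w ∈ G, (n_ jj w : ℝ)) ≤ condProb π v w' (w' v) * (∑ w ∈ G, (n_ jj w : ℝ)) :=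
        mul_le_mul_of_nonneg_right hd hGnn
      have s2 : condProb π v w' (w' v) * (∑ w ∈ G, (n_ jj w : ℝ))
          ≤ condProb π v w' (w' v) * (M : ℝ) :=
        mul_le_mul_of_nonneg_left ha hcpnn
      linarith [hb, hcsub]
    -- assemble
    have himg : (F jj).image σ ⊆ F (jj + 1) := by
      intro w' hw'
      obtain ⟨w, hw, rfl⟩ := Finset.mem_image.mp hw'
      exact hσmem w hw
    have h1 : ∑ w' ∈ (F jj).image σ, (n_ (jj + 1) w' : ℝ) ≤ c (jj + 1) := by
      rw [hceq]
      apply Finset.sum_le_sum_of_subset_of_nonneg himg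
      intro w' _ _
      exact Nat.cast_nonneg _
    have h2 := Finset.sum_le_sum hkey
    have h3 : ∑ w' ∈ (F jj).image σ,
        (πmin * (∑ w ∈ (F jj).filter (fun w => σ w = w'), (n_ jj w : ℝ)) - 3)
        = πmin * c jj - 3 * (((F jj).image σ).card : ℝ) := by
      rw [Finset.sum_sub_distrib, Finset.sum_const, ← Finset.mul_sum,
        Finset.sum_fiberwise_of_maps_to (fun w hw => Finset.mem_image_of_mem σ hw), hceq]
      simp [mul_comm]
    have h4 : (((F jj).image σ).card : ℝ) ≤ 2 ^ N := by
      have hle := Finset.card_le_univ ((F jj).image σ)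
      have hcardu : Fintype.card (GState N) = 2 ^ N := by
        simp [Fintype.card_fun]
      calc (((F jj).image σ).card : ℝ) ≤ (Fintype.card (GState N) : ℝ) := by
            exact_mod_cast hle
        _ = 2 ^ N := by rw [hcardu]; push_cast; ring
    rw [h3] at h2
    linarith
  -- chain
  have hchain : ∀ jj, jj ≤ L → πmin ^ jj * (T' : ℝ) - 3 * 2 ^ N * jj ≤ c jj := by
    intro jj
    induction jj with
    | zero => intro _; simpa using hbase
    | succ jj ih =>
      intro hjj
      have hjj' : jj ≤ L := by omega
      have hjjL : jj < L := by omega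
      have h1 := hstep jj hjjL
      have h2 := ih hjj'
      have hπjnn : (0:ℝ) ≤ πmin ^ jj := by positivity
      have hTnn : (0:ℝ) ≤ (T' : ℝ) := Nat.cast_nonneg _
      have h2N : (0:ℝ) ≤ 2 ^ N := by positivity
      have hcnnj := hcnn jj
      have hmono : πmin * (πmin ^ jj * (T' : ℝ) - 3 * 2 ^ N * jj) ≤ πmin * c jj :=
        mul_le_mul_of_nonneg_left h2 hπpos.le
      have hjcast : (0:ℝ) ≤ (jj : ℝ) := Nat.cast_nonneg _
      have hexp : πmin * (πmin ^ jj * (T' : ℝ) - 3 * 2 ^ N * jj)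
          = πmin ^ (jj + 1) * (T' : ℝ) - 3 * 2 ^ N * (πmin * jj) := by
        rw [pow_succ]; ring
      have hjj2 : πmin * (jj : ℝ) ≤ (jj : ℝ) := by nlinarith
      have hjj3 : 3 * 2 ^ N * (πmin * (jj:ℝ)) ≤ 3 * 2 ^ N * (jj : ℝ) := by nlinarith
      rw [hexp] at hmono
      push_cast
      linarith
  -- conclusion
  have hcL := hchain L (le_refl L)
  have hFL : F L = {x} := by
    apply Finset.ext
    intro w
    simp only [hF, Finset.mem_filter, Finset.mem_univ, true_and, Finset.mem_singleton]
    constructor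
    · rintro ⟨P, hP0, hPL, _⟩
      rw [Nat.sub_self] at hPL
      rw [← hP0, hPL]
    · intro hwx
      subst hwx
      exact ⟨fun _ => w, rfl, rfl, fun r hr => absurd hr (by omega)⟩
  have hcLeq : c L = (n_ L x : ℝ) := by
    rw [hceq, hFL, Finset.sum_singleton]
  have harrive : (n_ L x : ℝ) ≤
      (((Finset.Ico s (s + T)).filter fun k => hg.X (k * N + i) = x).card : ℝ) := by
    rw [hn_]
    have hinj : ∀ k ∈ ((Finset.Ico s (s + T')).filter fun k => hg.X (k * N + L) = x),
        k + nmax ∈ ((Finset.Ico s (s + T)).filter fun k => hg.X (k * N + i) = x) := by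
      intro k hk
      rw [Finset.mem_filter, Finset.mem_Ico] at hk ⊢
      rw [hT'] at hk
      refine ⟨⟨by omega, by omega⟩, ?_⟩
      have hre : (k + nmax) * N + i = k * N + L := by
        rw [hL]; ring
      rw [hre]
      exact hk.2
    have := Finset.card_le_card_of_injOn (fun k => k + nmax) hinj
      (fun a _ b _ hab => by
        have : a + nmax = b + nmax := hab
        omega)
    exact_mod_cast this
  have hTcast : (T' : ℝ) = (T : ℝ) - (nmax : ℝ) := by
    rw [hT']
    push_cast [Nat.cast_sub hTn]
    ring
  have hfin1 : πmin ^ m ≤ πmin ^ L := pow_le_pow_of_le_one hπpos.le hπle1 hLm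
  have hTnn : (0:ℝ) ≤ (T' : ℝ) := Nat.cast_nonneg _
  have hLc : ((L : ℝ)) ≤ (m : ℝ) := by exact_mod_cast hLm
  have h2N : (0:ℝ) < 2 ^ N := by positivity
  have hnmaxnn : (0:ℝ) ≤ (nmax : ℝ) := Nat.cast_nonneg _
  have hmain : πmin ^ L * (T' : ℝ) - 3 * 2 ^ N * L ≤
      (((Finset.Ico s (s + T)).filter fun k => hg.X (k * N + i) = x).card : ℝ) := by
    calc πmin ^ L * (T' : ℝ) - 3 * 2 ^ N * L ≤ c L := hcL
      _ = (n_ L x : ℝ) := hcLeq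
      _ ≤ _ := harrive
  have e1 : πmin ^ m * ((T : ℝ) - nmax) ≤ πmin ^ L * ((T : ℝ) - nmax) := by
    apply mul_le_mul_of_nonneg_right hfin1
    rw [← hTcast]; exact hTnn
  have e2 : 3 * 2 ^ N * (L : ℝ) ≤ 3 * 2 ^ N * (m : ℝ) :=
    mul_le_mul_of_nonneg_left hLc (by positivity)
  have e3 : πmin ^ m * (nmax : ℝ) ≤ (nmax : ℝ) := mul_le_of_le_one_left hnmaxnn hπm1
  have e4 : πmin ^ m * ((T : ℝ) - nmax) = πmin ^ m * (T : ℝ) - πmin ^ m * (nmax : ℝ) := by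
    ring
  have hstep1 : πmin ^ m * (T : ℝ) - C ≤ πmin ^ L * (T' : ℝ) - 3 * 2 ^ N * L := by
    rw [hTcast, hC]
    linarith only [e1, e2, e3, e4]
  linarith only [hstep1, hmain]

end Main

/-- Linear visiting rate: for herded Gibbs on a fully connected graph with
fixed scan order and irreducible corresponding Gibbs chain, there are constants l > 0 and
B > 0 — one may take l = π_min^{t*} and B = ⌈t*/N⌉·π_min^{t*} + ∑_{j<t*} π_min^j·2^{min(N,j)}
for a suitable path length t* — such that every support state is visited at every substep
at least l·T − B times in any window of T sweeps. -/
theorem herded_gibbs_linear_visiting_rate {N : ℕ} (hN : 0 < N)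
    (π : GState N → ℝ) (hπ0 : ∀ x, 0 ≤ π x) (hπ1 : ∑ x, π x = 1)
    (hg : HerdedGibbs N hN π)
    (πmin : ℝ)
    (hmin : IsLeast {p : ℝ | 0 < p ∧ ∃ (i : Fin N) (x : GState N) (b : Bool),
      p = condProb π i x b} πmin)
    (hirr : ∀ x y : GState N, 0 < π x → 0 < π y → ∃ n : ℕ, 0 < (sweepKernel π ^ n) x y) :
    ∃ tstar : ℕ, 0 < tstar ∧ ∃ l B : ℝ,
      l = πmin ^ tstar ∧
      B = (⌈(tstar : ℝ) / (N : ℝ)⌉₊ : ℝ) * πmin ^ tstar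
            + ∑ j ∈ Finset.range tstar, πmin ^ j * (2 : ℝ) ^ (min N j) ∧
      0 < l ∧ 0 < B ∧
      ∀ i : ℕ, 1 ≤ i → i ≤ N → ∀ x : GState N, 0 < π x → ∀ T s : ℕ,
        l * (T : ℝ) - B
          ≤ (((Finset.Ico s (s + T)).filter fun k => hg.X (k * N + i) = x).card : ℝ) := by
  obtain ⟨m, C, hC1, hmain⟩ := main_linear hN π hπ0 hg πmin hmin hirr
  have hπpos : 0 < πmin := hmin.1.1
  obtain ⟨i0, x0, b0, hπeq⟩ := hmin.1.2
  have hπle1 : πmin ≤ 1 := hπeq.le.trans (condProb_le_one π hπ0 i0 x0 b0)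
  -- the B value as a function of tstar, and its basic lower bound
  have hBsum : ∀ t : ℕ, 1 ≤ t →
      (1:ℝ) ≤ ∑ j ∈ Finset.range t, πmin ^ j * (2 : ℝ) ^ (min N j) := by
    intro t ht
    have h0 : (0:ℕ) ∈ Finset.range t := Finset.mem_range.mpr (by omega)
    have hterm : πmin ^ 0 * (2:ℝ) ^ (min N 0) = 1 := by simp
    calc (1:ℝ) = πmin ^ 0 * (2:ℝ) ^ (min N 0) := hterm.symm
      _ ≤ ∑ j ∈ Finset.range t, πmin ^ j * (2 : ℝ) ^ (min N j) :=
        Finset.single_le_sum (f := fun j => πmin ^ j * (2:ℝ) ^ (min N j))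
          (fun j _ => by positivity) h0
  rcases lt_or_eq_of_le hπle1 with hlt | heq
  · -- πmin < 1
    obtain ⟨t₀, ht₀⟩ := exists_pow_lt_of_lt_one
      (show (0:ℝ) < πmin ^ m / (C + 1) by positivity) hlt
    refine ⟨t₀ + 1, by omega, πmin ^ (t₀ + 1), _, rfl, rfl, pow_pos hπpos _, ?_, ?_⟩
    · -- B > 0
      have h1 := hBsum (t₀ + 1) (by omega)
      have h2 : (0:ℝ) ≤ (⌈((t₀ + 1 : ℕ) : ℝ) / (N : ℝ)⌉₊ : ℝ) * πmin ^ (t₀ + 1) := by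
        positivity
      linarith
    · intro i hi1 hiN x hx T s
      have hmain' := hmain i hi1 hiN x hx T s
      set Bv : ℝ := (⌈((t₀ + 1 : ℕ) : ℝ) / (N : ℝ)⌉₊ : ℝ) * πmin ^ (t₀ + 1)
        + ∑ j ∈ Finset.range (t₀ + 1), πmin ^ j * (2 : ℝ) ^ (min N j) with hBv
    -- B ≥ 1
      have hBv1 : (1:ℝ) ≤ Bv := by
        have h1 := hBsum (t₀ + 1) (by omega)
        have h2 : (0:ℝ) ≤ (⌈((t₀ + 1 : ℕ) : ℝ) / (N : ℝ)⌉₊ : ℝ) * πmin ^ (t₀ + 1) := by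
          positivity
        rw [hBv]; linarith
      have hcnt : (0:ℝ) ≤ (((Finset.Ico s (s + T)).filter fun k =>
          hg.X (k * N + i) = x).card : ℝ) := Nat.cast_nonneg _
      by_cases hcase : πmin ^ (t₀ + 1) * (T : ℝ) ≤ Bv
      · linarith
      · push_neg at hcase
        have hT1 : (1:ℝ) ≤ πmin ^ (t₀ + 1) * (T : ℝ) := le_of_lt (lt_of_le_of_lt hBv1 hcase)
        -- (C+1) * πmin^(t₀+1) ≤ πmin^m
        have hkey : (C + 1) * πmin ^ (t₀ + 1) ≤ πmin ^ m := by
          have hstep : πmin ^ (t₀ + 1) ≤ πmin ^ t₀ := by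
            rw [pow_succ]
            have := pow_pos hπpos t₀
            nlinarith
          have h2 : πmin ^ (t₀ + 1) ≤ πmin ^ m / (C + 1) := hstep.trans ht₀.le
          have hC0 : (0:ℝ) < C + 1 := by linarith
          rw [le_div_iff₀ hC0] at h2
          linarith [h2]
        have hTnn : (0:ℝ) ≤ (T:ℝ) := Nat.cast_nonneg _
        have h5 : (C + 1) * (πmin ^ (t₀ + 1) * (T:ℝ)) ≤ πmin ^ m * (T:ℝ) := by
          have := mul_le_mul_of_nonneg_right hkey hTnn
          calc (C + 1) * (πmin ^ (t₀ + 1) * (T:ℝ)) = (C + 1) * πmin ^ (t₀ + 1) * (T:ℝ) := by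
                ring
            _ ≤ πmin ^ m * (T:ℝ) := this
        nlinarith [hmain', hT1, hC1, hBv1]
  · -- πmin = 1
    set t : ℕ := max 1 ⌈C⌉₊ with htdef
    refine ⟨t, by omega, πmin ^ t, _, rfl, rfl, pow_pos hπpos _, ?_, ?_⟩
    · have h1 := hBsum t (by omega)
      have h2 : (0:ℝ) ≤ (⌈((t : ℕ) : ℝ) / (N : ℝ)⌉₊ : ℝ) * πmin ^ t := by positivity
      linarith
    · intro i hi1 hiN x hx T s
      have hmain' := hmain i hi1 hiN x hx T s
      rw [heq] at hmain' ⊢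
      simp only [one_pow, one_mul] at hmain' ⊢
      have hsum : (t:ℝ) ≤ ∑ j ∈ Finset.range t, (2 : ℝ) ^ (min N j) := by
        have hterm : ∀ j ∈ Finset.range t, (1:ℝ) ≤ (2 : ℝ) ^ (min N j) := by
          intro j _
          exact one_le_pow₀ (by norm_num)
        calc (t:ℝ) = ∑ _j ∈ Finset.range t, (1:ℝ) := by simp
          _ ≤ _ := Finset.sum_le_sum hterm
      have h2 : (0:ℝ) ≤ (⌈((t : ℕ) : ℝ) / (N : ℝ)⌉₊ : ℝ) := by positivity
      have hCt : C ≤ (t : ℝ) := by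
        have h1 : C ≤ (⌈C⌉₊ : ℝ) := Nat.le_ceil C
        have h2' : (⌈C⌉₊ : ℕ) ≤ t := le_max_right _ _
        have h3 : ((⌈C⌉₊ : ℕ) : ℝ) ≤ (t : ℝ) := by exact_mod_cast h2'
        linarith
      linarith
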